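/- Let 0 < τ < 1 and let F'(s) = (z₊+z₋)²/(2(1+s)²) − (z₊−z₋)²/(2(1−s)²) − 1/s for z₊, z₋ ∈ ℂ. Then: (iii) if z₊ ∈ {−√2, √2} and z₋ ∉ {−√2, √2}, and s₋ is a complex number with s₋² = z₋² − 2, then the set {s ∈ ℂ∖{0,1,−1} : F'(s) = 0} equals {z₊(z₋+s₋)/2, z₊(z₋−s₋)/2}, and each of these two points is a zero of F' of order exactly two (i.e. F' = F'' = 0 and F''' ≠ 0 there); (iv) if z₊ = ε·z₋ with ε ∈ {1,−1} and both z₊, z₋ ∈ {−√2, √2}, then one of the two singular factors of F' has vanishing numerator, F' extends holomorphically to the point s* = z₊z₋/2 ∈ {1, −1}, and s* is the unique zero of F' in its (extended) domain ℂ∖{0, −s*}, of order exactly two. -/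

import Mathlib

open scoped BigOperators Real
open ComplexConjugate

/-- The derivative `F'` of the phase function. -/
noncomputable def Fd1 (zp zm s : ℂ) : ℂ :=
  (zp + zm) ^ 2 / (2 * (1 + s) ^ 2) - (zp - zm) ^ 2 / (2 * (1 - s) ^ 2) - 1 / s

/-- The second derivative `F''` of the phase function. -/
noncomputable def Fd2 (zp zm s : ℂ) : ℂ :=
  -(zp + zm) ^ 2 / (1 + s) ^ 3 - (zp - zm) ^ 2 / (1 - s) ^ 3 + 1 / s ^ 2

/-- The third derivative `F'''` of the phase function. -/
noncomputable def Fd3 (zp zm s : ℂ) : ℂ :=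
  3 * (zp + zm) ^ 2 / (1 + s) ^ 4 - 3 * (zp - zm) ^ 2 / (1 - s) ^ 4 - 2 / s ^ 3

lemma sq2C : ((Real.sqrt 2 : ℝ) : ℂ) ^ 2 = 2 := by
  norm_cast
  rw [Real.sq_sqrt] <;> norm_num

lemma zp2_of {zp : ℂ} (h : zp = -(Real.sqrt 2 : ℂ) ∨ zp = (Real.sqrt 2 : ℂ)) :
    zp ^ 2 = 2 := by
  rcases h with rfl | rfl
  · rw [neg_pow]; simp [sq2C]
  · exact sq2C

lemma zm2_ne {zm : ℂ} (h1 : zm ≠ -(Real.sqrt 2 : ℂ)) (h2 : zm ≠ (Real.sqrt 2 : ℂ)) :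
    zm ^ 2 ≠ 2 := by
  intro h
  have hfac : (zm - (Real.sqrt 2 : ℂ)) * (zm + (Real.sqrt 2 : ℂ)) = 0 := by
    linear_combination h - sq2C
  rcases mul_eq_zero.mp hfac with h' | h'
  · exact h2 (by linear_combination h')
  · exact h1 (by linear_combination h')

lemma Fd1_zero_of_g {zp zm s : ℂ} (hzp2 : zp ^ 2 = 2)
    (hg : s ^ 2 - zp * zm * s + 1 = 0)
    (hs0 : s ≠ 0) (hs1 : (1 : ℂ) + s ≠ 0) (hs2 : (1 : ℂ) - s ≠ 0) :
    Fd1 zp zm s = 0 := by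
  rw [Fd1]; field_simp
  linear_combination (2*zm^2*s^2 - 4*s^2) * hzp2 + ((-2) + (-2)*s^2 + 2*zp*zm*s) * hg

lemma Fd2_zero_of_g {zp zm s : ℂ} (hzp2 : zp ^ 2 = 2)
    (hg : s ^ 2 - zp * zm * s + 1 = 0)
    (hs0 : s ≠ 0) (hs1 : (1 : ℂ) + s ≠ 0) (hs2 : (1 : ℂ) - s ≠ 0) :
    Fd2 zp zm s = 0 := by
  rw [Fd2]; field_simp
  linear_combination ((-2)*s^2 + (-6)*s^4 + zm^2*s^2 + 3*zm^2*s^4) * hzp2 +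
    (1 + (-8)*s^2 + (-1)*s^4 + zp*zm*s + 3*zp*zm*s^3) * hg

lemma Fd3_eq_of_g {zp zm sm s : ℂ} (hzp2 : zp ^ 2 = 2)
    (hg : s ^ 2 - zp * zm * s + 1 = 0) (hsm : sm ^ 2 = zm ^ 2 - 2)
    (hs0 : s ≠ 0) (hs1 : (1 : ℂ) + s ≠ 0) (hs2 : (1 : ℂ) - s ≠ 0) :
    Fd3 zp zm s = -4 * sm ^ 2 / (s * (1 + s) ^ 2 * (1 - s) ^ 2) := by
  rw [Fd3, hsm]; field_simp
  linear_combination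
    (-24*s^4*(1+s^2) - (2-16*s^2-10*s^4)*zm^2*s^2) * hzp2 +
    (-(2-16*s^2-10*s^4)*(zp*zm*s+s^2+1) - 12*s^2*(1+6*s^2+s^4)) * hg

lemma g_ne_of {zp zm s : ℂ} (hzp2 : zp ^ 2 = 2) (hzm2 : zm ^ 2 ≠ 2)
    (hg : s ^ 2 - zp * zm * s + 1 = 0) : s ≠ 0 ∧ s ≠ 1 ∧ s ≠ -1 := by
  refine ⟨?_, ?_, ?_⟩
  · rintro rfl; simp at hg
  · rintro rfl
    have h : zp * zm = 2 := by linear_combination -hg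
    exact hzm2 (by linear_combination (-(1:ℂ)/2) * zm^2 * hzp2 + (1/2) * (zp*zm + 2) * h)
  · rintro rfl
    have h : zp * zm = -2 := by linear_combination hg
    exact hzm2 (by linear_combination (-(1:ℂ)/2) * zm^2 * hzp2 + (1/2) * (zp*zm - 2) * h)

/-- Saddle points of the phase function, degenerate cases (iii) and (iv). -/
theorem stmt_5 (τ : ℝ) (hτ0 : 0 < τ) (hτ1 : τ < 1) :
    -- (iii)
    (∀ zp zm sm : ℂ, (zp = -(Real.sqrt 2 : ℂ) ∨ zp = (Real.sqrt 2 : ℂ)) →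
      (zm ≠ -(Real.sqrt 2 : ℂ) ∧ zm ≠ (Real.sqrt 2 : ℂ)) → sm ^ 2 = zm ^ 2 - 2 →
        ({s : ℂ | s ≠ 0 ∧ s ≠ 1 ∧ s ≠ -1 ∧ Fd1 zp zm s = 0} =
            {zp * (zm + sm) / 2, zp * (zm - sm) / 2} ∧
          ∀ p ∈ ({zp * (zm + sm) / 2, zp * (zm - sm) / 2} : Set ℂ),
            Fd1 zp zm p = 0 ∧ Fd2 zp zm p = 0 ∧ Fd3 zp zm p ≠ 0)) ∧
    -- (iv)
    (∀ zp zm : ℂ, ∀ ε : ℂ, (ε = 1 ∨ ε = -1) → zp = ε * zm →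
      (zp = -(Real.sqrt 2 : ℂ) ∨ zp = (Real.sqrt 2 : ℂ)) →
      (zm = -(Real.sqrt 2 : ℂ) ∨ zm = (Real.sqrt 2 : ℂ)) →
        ((zp + zm) ^ 2 = 0 ∨ (zp - zm) ^ 2 = 0) ∧
        (zp * zm / 2 = 1 ∨ zp * zm / 2 = -1) ∧
        DifferentiableOn ℂ (Fd1 zp zm) {s : ℂ | s ≠ 0 ∧ s ≠ -(zp * zm / 2)} ∧
        {s : ℂ | s ≠ 0 ∧ s ≠ -(zp * zm / 2) ∧ Fd1 zp zm s = 0} = {zp * zm / 2} ∧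
        Fd2 zp zm (zp * zm / 2) = 0 ∧ Fd3 zp zm (zp * zm / 2) ≠ 0) := by
  constructor
  · -- (iii)
    intro zp zm sm hzp hzm hsm
    have hzp2 : zp ^ 2 = 2 := zp2_of hzp
    have hzm2 : zm ^ 2 ≠ 2 := zm2_ne hzm.1 hzm.2
    have hsm0 : sm ≠ 0 := by
      rintro rfl; exact hzm2 (by linear_combination -hsm)
    have hzp0 : zp ≠ 0 := by
      rintro rfl; norm_num at hzp2
    have hg1 : (zp * (zm + sm) / 2) ^ 2 - zp * zm * (zp * (zm + sm) / 2) + 1 = 0 := by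
      linear_combination (zp^2/4) * hsm - (1/2 : ℂ) * hzp2
    have hg2 : (zp * (zm - sm) / 2) ^ 2 - zp * zm * (zp * (zm - sm) / 2) + 1 = 0 := by
      linear_combination (zp^2/4) * hsm - (1/2 : ℂ) * hzp2
    obtain ⟨h10, h11, h11'⟩ := g_ne_of hzp2 hzm2 hg1
    obtain ⟨h20, h21, h21'⟩ := g_ne_of hzp2 hzm2 hg2
    have h1p : (1 : ℂ) + zp * (zm + sm) / 2 ≠ 0 := fun h => h11' (by linear_combination h)
    have h1m : (1 : ℂ) - zp * (zm + sm) / 2 ≠ 0 := fun h => h11 (by linear_combination -h)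
    have h2p : (1 : ℂ) + zp * (zm - sm) / 2 ≠ 0 := fun h => h21' (by linear_combination h)
    have h2m : (1 : ℂ) - zp * (zm - sm) / 2 ≠ 0 := fun h => h21 (by linear_combination -h)
    constructor
    · ext s
      simp only [Set.mem_setOf_eq, Set.mem_insert_iff, Set.mem_singleton_iff]
      constructor
      · rintro ⟨hs0, hs1, hs1', hF⟩
        have hsp : (1 : ℂ) + s ≠ 0 := fun h => hs1' (by linear_combination h)
        have hsmn : (1 : ℂ) - s ≠ 0 := fun h => hs1 (by linear_combination -h)
        rw [Fd1] at hF
        field_simp at hF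
        have hsq : (s ^ 2 - zp * zm * s + 1) ^ 2 = 0 := by
          linear_combination (-(1:ℂ)/2) * hF + (zm^2*s^2 - 2*s^2) * hzp2
        have hg : s ^ 2 - zp * zm * s + 1 = 0 := by
          exact sq_eq_zero_iff.mp hsq
        have hfac : (s - zp * (zm + sm) / 2) * (s - zp * (zm - sm) / 2) = 0 := by
          linear_combination hg + (-(zp^2)/4) * hsm + (1/2 : ℂ) * hzp2
        rcases mul_eq_zero.mp hfac with h | h
        · exact Or.inl (by linear_combination h)
        · exact Or.inr (by linear_combination h)
      · rintro (rfl | rfl)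
        · exact ⟨h10, h11, h11', Fd1_zero_of_g hzp2 hg1 h10 h1p h1m⟩
        · exact ⟨h20, h21, h21', Fd1_zero_of_g hzp2 hg2 h20 h2p h2m⟩
    · intro p hp
      have hden : ∀ q : ℂ, q ≠ 0 → (1:ℂ) + q ≠ 0 → (1:ℂ) - q ≠ 0 →
          q * (1 + q) ^ 2 * (1 - q) ^ 2 ≠ 0 := fun q a b c =>
        mul_ne_zero (mul_ne_zero a (pow_ne_zero _ b)) (pow_ne_zero _ c)
      have hnum : -4 * sm ^ 2 ≠ 0 := by
        intro h
        exact hsm0 (pow_eq_zero_iff (two_ne_zero) |>.mp (by linear_combination (-(1:ℂ)/4) * h))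
      rcases hp with rfl | hp
      · refine ⟨Fd1_zero_of_g hzp2 hg1 h10 h1p h1m, Fd2_zero_of_g hzp2 hg1 h10 h1p h1m, ?_⟩
        rw [Fd3_eq_of_g hzp2 hg1 hsm h10 h1p h1m]
        exact div_ne_zero hnum (hden _ h10 h1p h1m)
      · rw [Set.mem_singleton_iff] at hp
        subst hp
        refine ⟨Fd1_zero_of_g hzp2 hg2 h20 h2p h2m, Fd2_zero_of_g hzp2 hg2 h20 h2p h2m, ?_⟩
        rw [Fd3_eq_of_g hzp2 hg2 hsm h20 h2p h2m]
        exact div_ne_zero hnum (hden _ h20 h2p h2m)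
  · -- (iv)
    intro zp zm ε hε hzpε hzp hzm
    have hzm2 : zm ^ 2 = 2 := zp2_of hzm
    rcases hε with rfl | rfl
    · -- zp = zm
      have hzz : zp = zm := by rw [hzpε, one_mul]
      subst hzz
      have hpm : zp * zp / 2 = 1 := by linear_combination (1/2 : ℂ) * hzm2
      have hFeq : Fd1 zp zp = fun s => (2 * zp) ^ 2 / (2 * (1 + s) ^ 2) - 1 / s := by
        funext s
        rw [Fd1, sub_self]
        ring_nf
      refine ⟨Or.inr (by ring), Or.inl hpm, ?_, ?_, ?_, ?_⟩
      · rw [hFeq, hpm]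
        apply DifferentiableOn.sub
        · apply DifferentiableOn.div (differentiableOn_const _)
          · exact ((differentiable_const _).mul ((differentiable_id.const_add _).pow 2)).differentiableOn
          · intro x hx
            exact mul_ne_zero two_ne_zero (pow_ne_zero _
              (fun h => hx.2 (by linear_combination h)))
        · exact DifferentiableOn.div (differentiableOn_const _) differentiableOn_id
            (fun x hx => hx.1)
      · rw [hpm]
        ext s
        simp only [Set.mem_setOf_eq, Set.mem_singleton_iff]
        constructor
        · rintro ⟨hs0, hs1, hF⟩
          have hsp : (1 : ℂ) + s ≠ 0 := fun h => hs1 (by linear_combination h)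
          rw [hFeq] at hF
          field_simp at hF
          have : (s - 1) ^ 2 = 0 := by
            linear_combination (-1:ℂ) * hF + 2 * s * hzm2
          have := sq_eq_zero_iff.mp this
          linear_combination this
        · rintro rfl
          refine ⟨one_ne_zero, by norm_num, ?_⟩
          rw [hFeq]
          show (2 * zp) ^ 2 / (2 * ((1 : ℂ) + 1) ^ 2) - 1 / 1 = 0
          linear_combination (1/2 : ℂ) * hzm2
      · rw [hpm, Fd2, sub_self]
        norm_num
        linear_combination (-(1:ℂ)/2) * hzm2
      · rw [hpm, Fd3, sub_self]
        norm_num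
        intro h
        have : zp ^ 2 = 8/3 := by linear_combination (4/3 : ℂ) * h
        rw [hzm2] at this
        norm_num at this
    · -- zp = -zm
      have hzz : zp = -zm := by rw [hzpε]; ring
      subst hzz
      have hpm : -zm * zm / 2 = -1 := by linear_combination (-(1/2) : ℂ) * hzm2
      have hFeq : Fd1 (-zm) zm = fun s => -((2 * zm) ^ 2 / (2 * (1 - s) ^ 2)) - 1 / s := by
        funext s
        rw [Fd1, show (-zm + zm : ℂ) = 0 by ring]
        ring_nf
      refine ⟨Or.inl (by ring), Or.inr hpm, ?_, ?_, ?_, ?_⟩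
      · rw [hFeq, hpm]
        apply DifferentiableOn.sub
        · apply DifferentiableOn.neg
          apply DifferentiableOn.div (differentiableOn_const _)
          · exact ((differentiable_const _).mul ((differentiable_id.const_sub _).pow 2)).differentiableOn
          · intro x hx
            refine mul_ne_zero two_ne_zero (pow_ne_zero _ (fun h => hx.2 ?_))
            rw [neg_neg]
            linear_combination -h
        · exact DifferentiableOn.div (differentiableOn_const _) differentiableOn_id
            (fun x hx => hx.1)
      · rw [hpm]
        ext s
        simp only [Set.mem_setOf_eq, Set.mem_singleton_iff, neg_neg]
        constructor
        · rintro ⟨hs0, hs1, hF⟩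
          have hsp : (1 : ℂ) - s ≠ 0 := fun h => hs1 (by linear_combination -h)
          rw [hFeq] at hF
          field_simp at hF
          have : (s + 1) ^ 2 = 0 := by
            linear_combination (-1:ℂ) * hF - 2 * s * hzm2
          have := sq_eq_zero_iff.mp this
          linear_combination this
        · rintro rfl
          refine ⟨by norm_num, by norm_num, ?_⟩
          rw [hFeq]
          show -((2 * zm) ^ 2 / (2 * ((1 : ℂ) - -1) ^ 2)) - 1 / (-1) = 0
          linear_combination (-(1/2) : ℂ) * hzm2
      · rw [hpm, Fd2, show (-zm + zm : ℂ) = 0 by ring]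
        norm_num
        linear_combination (-(1/2) : ℂ) * hzm2
      · rw [hpm, Fd3, show (-zm + zm : ℂ) = 0 by ring]
        norm_num
        intro h
        have : zm ^ 2 = 8/3 := by linear_combination (-(4/3) : ℂ) * h
        rw [hzm2] at this
        norm_num at this
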